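/- arXiv:1910.12119 — 3 statements merged into one kernel-verified Lean document; each statement's English description precedes it below -/
import Mathlib

section
/- Fix real numbers λ₁ ≠ λ₂. Let the group ℝ × ℝˣ act on (ℝ \ {0}) × (ℝ \ {0}) by (σ, κ)·(a, b) = (κe^{-λ₁σ}a, κe^{-λ₂σ}b). Then this action has exactly two orbits, distinguished by the sign of the product ab; i.e., (a,b) and (a',b') lie in the same orbit if and only if ab and a'b' have the same sign. -/
/-- For `λ₁ ≠ λ₂`, the action of `ℝ × ℝˣ` on `(ℝ∖{0})²` by
`(σ, κ)·(a, b) = (κe^{-λ₁σ}a, κe^{-λ₂σ}b)` has exactly two orbits, distinguished by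
the sign of `ab`: two pairs lie in the same orbit iff their products have the same
sign. -/
theorem two_orbits_rescaling_translation (l₁ l₂ : ℝ) (hl : l₁ ≠ l₂)
    (a b a' b' : ℝ) (ha : a ≠ 0) (hb : b ≠ 0) (ha' : a' ≠ 0) (hb' : b' ≠ 0) :
    (∃ σ κ : ℝ, κ ≠ 0 ∧
        a' = κ * Real.exp (-l₁ * σ) * a ∧ b' = κ * Real.exp (-l₂ * σ) * b)
      ↔ (0 < a * b ↔ 0 < a' * b') := by
  constructor
  · rintro ⟨σ, κ, hκ, rfl, rfl⟩
    have h1 := Real.exp_pos (-l₁ * σ)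
    have h2 := Real.exp_pos (-l₂ * σ)
    have hκ2 : 0 < κ * κ := mul_self_pos.mpr hκ
    constructor
    · intro h; nlinarith [mul_pos (mul_pos hκ2 (mul_pos h1 h2)) h, mul_pos hκ2 (mul_pos h1 h2)]
    · intro h; nlinarith [mul_pos (mul_pos hκ2 (mul_pos h1 h2)) h, mul_pos hκ2 (mul_pos h1 h2)]
  · intro hsign
    have htab : a * b ≠ 0 := mul_ne_zero ha hb
    have ht : 0 < a' * b / (a * b') := by
      have heq : a' * b / (a * b') = (a' * b') * (a * b) / ((b' * a) ^ 2) := by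
        field_simp
      rw [heq]
      apply div_pos
      · rcases lt_trichotomy (a * b) 0 with h | h | h
        · have h' : ¬ 0 < a' * b' := fun hp => absurd (hsign.mpr hp) (not_lt.mpr h.le)
          have h'' : a' * b' < 0 := lt_of_le_of_ne (not_lt.mp h') (mul_ne_zero ha' hb')
          exact mul_pos_of_neg_of_neg h'' h
        · exact absurd h htab
        · exact mul_pos (hsign.mp h) h
      · positivity
    set σ := Real.log (a' * b / (a * b')) / (l₂ - l₁) with hσ
    have hll : l₂ - l₁ ≠ 0 := sub_ne_zero.mpr (Ne.symm hl)
    have hexp : Real.exp ((l₂ - l₁) * σ) = a' * b / (a * b') := by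
      rw [hσ, mul_div_cancel₀ _ hll, Real.exp_log ht]
    have key : Real.exp (-l₁ * σ) = a' * b / (a * b') * Real.exp (-l₂ * σ) := by
      rw [← hexp, ← Real.exp_add]; ring_nf
    refine ⟨σ, a' / (Real.exp (-l₁ * σ) * a), ?_, ?_, ?_⟩
    · exact div_ne_zero ha' (mul_ne_zero (Real.exp_ne_zero _) ha)
    · field_simp
    · rw [key]
      have h2 : Real.exp (-l₂ * σ) ≠ 0 := Real.exp_ne_zero _
      field_simp
end

section
/- Let C_o, C_s, C_u be F_2-vector spaces and suppose given F_2-linear maps d_oo : C_o → C_o, d_os : C_s → C_o, d_uo : C_o → C_u, d_us : C_s → C_u, and d∂_ss : C_s → C_s, d∂_su : C_u → C_s, d∂_us : C_s → C_u, d∂_uu : C_u → C_u, satisfying: (i) d_oo² + d_os d∂_su d_uo = 0; (ii) d_oo d_os + d_os d∂_ss + d_os d∂_su d_us = 0; (iii) d_uo d_oo + d∂_uu d_uo + d_us d∂_su d_uo = 0; (iv) d∂_us + d_uo d_os + d∂_uu d_us + d_us d∂_ss + d_us d∂_su d_us = 0; (v) d∂_ss² + d∂_su d∂_us = 0; (vi)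 d∂_ss d∂_su + d∂_su d∂_uu = 0; (vii) d∂_us d∂_ss + d∂_uu d∂_us = 0; (viii) d∂_us d∂_su + d∂_uu² = 0. Then the operator ď on C_o ⊕ C_s given in block form by ď = [[d_oo, d_os],[d∂_su d_uo, d∂_ss + d∂_su d_us]] satisfies ď² = 0, and the operator d̂ on C_o ⊕ C_u given by d̂ = [[d_oo, d_os d∂_su],[d_uo, d∂_uu + d_us d∂_su]] satisfies d̂² = 0. -/
private lemma two_aux {M : Type*} [AddCommGroup M] [Module (ZMod 2) M] (a : M) :
    a + a = 0 := by
  have h : (2 : ZMod 2) • a = a + a := two_smul _ a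
  rw [show (2 : ZMod 2) = 0 from rfl, zero_smul] at h
  exact h.symm

/-- Given the eight trajectory-counting operators of Morse theory for manifolds with
boundary, satisfying Kronheimer–Mrowka's relations (i)–(viii), the `check` operator
on `C_o ⊕ C_s` and the `hat` operator on `C_o ⊕ C_u` both square to zero. -/
theorem check_hat_differentials {Co Cs Cu : Type*}
    [AddCommGroup Co] [Module (ZMod 2) Co]
    [AddCommGroup Cs] [Module (ZMod 2) Cs]
    [AddCommGroup Cu] [Module (ZMod 2) Cu]
    (doo : Co →ₗ[ZMod 2] Co) (dos : Cs →ₗ[ZMod 2] Co)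
    (duo : Co →ₗ[ZMod 2] Cu) (dus : Cs →ₗ[ZMod 2] Cu)
    (bss : Cs →ₗ[ZMod 2] Cs) (bsu : Cu →ₗ[ZMod 2] Cs)
    (bus : Cs →ₗ[ZMod 2] Cu) (buu : Cu →ₗ[ZMod 2] Cu)
    (h1 : doo ∘ₗ doo + dos ∘ₗ bsu ∘ₗ duo = 0)
    (h2 : doo ∘ₗ dos + dos ∘ₗ bss + dos ∘ₗ bsu ∘ₗ dus = 0)
    (h3 : duo ∘ₗ doo + buu ∘ₗ duo + dus ∘ₗ bsu ∘ₗ duo = 0)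
    (h4 : bus + duo ∘ₗ dos + buu ∘ₗ dus + dus ∘ₗ bss + dus ∘ₗ bsu ∘ₗ dus = 0)
    (h5 : bss ∘ₗ bss + bsu ∘ₗ bus = 0)
    (h6 : bss ∘ₗ bsu + bsu ∘ₗ buu = 0)
    (h7 : bus ∘ₗ bss + buu ∘ₗ bus = 0)
    (h8 : bus ∘ₗ bsu + buu ∘ₗ buu = 0) :
    let dCheck : (Co × Cs) →ₗ[ZMod 2] (Co × Cs) :=
      LinearMap.prod
        (doo ∘ₗ LinearMap.fst (ZMod 2) Co Cs + dos ∘ₗ LinearMap.snd (ZMod 2) Co Cs)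
        ((bsu ∘ₗ duo) ∘ₗ LinearMap.fst (ZMod 2) Co Cs +
          (bss + bsu ∘ₗ dus) ∘ₗ LinearMap.snd (ZMod 2) Co Cs)
    let dHat : (Co × Cu) →ₗ[ZMod 2] (Co × Cu) :=
      LinearMap.prod
        (doo ∘ₗ LinearMap.fst (ZMod 2) Co Cu + (dos ∘ₗ bsu) ∘ₗ LinearMap.snd (ZMod 2) Co Cu)
        (duo ∘ₗ LinearMap.fst (ZMod 2) Co Cu +
          (buu + dus ∘ₗ bsu) ∘ₗ LinearMap.snd (ZMod 2) Co Cu)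
    dCheck ∘ₗ dCheck = 0 ∧ dHat ∘ₗ dHat = 0 := by
  intro dCheck dHat
  have H1 : ∀ x, doo (doo x) + dos (bsu (duo x)) = 0 := fun x => by
    simpa using LinearMap.congr_fun h1 x
  have H2 : ∀ x, doo (dos x) + dos (bss x) + dos (bsu (dus x)) = 0 := fun x => by
    simpa using LinearMap.congr_fun h2 x
  have H3 : ∀ x, duo (doo x) + buu (duo x) + dus (bsu (duo x)) = 0 := fun x => by
    simpa using LinearMap.congr_fun h3 x
  have H4 : ∀ x, bus x + duo (dos x) + buu (dus x) + dus (bss x) + dus (bsu (dus x)) = 0 :=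
    fun x => by simpa using LinearMap.congr_fun h4 x
  have H5 : ∀ x, bss (bss x) + bsu (bus x) = 0 := fun x => by
    simpa using LinearMap.congr_fun h5 x
  have H6 : ∀ x, bss (bsu x) + bsu (buu x) = 0 := fun x => by
    simpa using LinearMap.congr_fun h6 x
  have H8 : ∀ x, bus (bsu x) + buu (buu x) = 0 := fun x => by
    simpa using LinearMap.congr_fun h8 x
  have B3 : ∀ x, bsu (duo (doo x)) + bsu (buu (duo x)) + bsu (dus (bsu (duo x))) = 0 :=
    fun x => by have := congrArg bsu (H3 x); simpa [map_add] using this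
  have B4 : ∀ x, bsu (bus x) + bsu (duo (dos x)) + bsu (buu (dus x)) + bsu (dus (bss x))
      + bsu (dus (bsu (dus x))) = 0 := fun x => by
    have := congrArg bsu (H4 x); simpa [map_add] using this
  have B6 : ∀ x, bss (bss (bsu x)) + bss (bsu (buu x)) = 0 := fun x => by
    have := congrArg bss (H6 x); simpa [map_add] using this
  have D6 : ∀ u, dos (bss (bsu u)) + dos (bsu (buu u)) = 0 := fun u => by
    have := congrArg dos (H6 u); simpa [map_add] using this
  have U6 : ∀ u, dus (bss (bsu u)) + dus (bsu (buu u)) = 0 := fun u => by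
    have := congrArg dus (H6 u); simpa [map_add] using this
  constructor
  · apply LinearMap.ext
    rintro ⟨x, y⟩
    simp only [dCheck, LinearMap.comp_apply, LinearMap.prod_apply, Function.prod,
      LinearMap.add_apply, LinearMap.fst_apply, LinearMap.snd_apply, LinearMap.zero_apply,
      map_add, Prod.mk_add_mk, Prod.ext_iff, Prod.fst_zero, Prod.snd_zero]
    refine ⟨?_, ?_⟩
    · linear_combination (norm := module) H1 x + H2 y
    · linear_combination (norm := module) B3 x + H6 (duo x) + B4 y + H5 y + H6 (dus y)
        - two_aux (bsu (buu (duo x))) - two_aux (bsu (bus y)) - two_aux (bsu (buu (dus y)))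
  · apply LinearMap.ext
    rintro ⟨x, u⟩
    simp only [dHat, LinearMap.comp_apply, LinearMap.prod_apply, Function.prod,
      LinearMap.add_apply, LinearMap.fst_apply, LinearMap.snd_apply, LinearMap.zero_apply,
      map_add, Prod.mk_add_mk, Prod.ext_iff, Prod.fst_zero, Prod.snd_zero]
    refine ⟨?_, ?_⟩
    · linear_combination (norm := module) H1 x + H2 (bsu u) + D6 u - two_aux (dos (bss (bsu u)))
    · linear_combination (norm := module) H3 x + H4 (bsu u) + H8 u + U6 u
        - two_aux (bus (bsu u)) - two_aux (dus (bss (bsu u)))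
end

section
/- Under the same hypotheses as the eight-operator relations for Morse theory on manifolds with boundary (relations (i)–(viii)), define the chain complexes (Č = C_o ⊕ C_s, ď), (Ĉ = C_o ⊕ C_u, d̂), and (C̄ = C_s ⊕ C_u, d̄ = [[d∂_ss, d∂_su],[d∂_us, d∂_uu]]). Then the maps j* : Ĉ → Č given by the block matrix [[id_{C_o}, 0],[0, d∂_su]], i* : Č → C̄ given by [[0, id_{C_s}],[d_uo, d_us]], and ∂ : C̄ → Ĉ given by [[d_os, 0],[d_us, id_{C_u}]] are all chain maps: ď∘j* = j*∘d̂, d̄∘i* = i*∘ď, and d̂∘∂ = ∂∘d̄. -/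
private lemma char2_add_self {M : Type*} [AddCommGroup M] [Module (ZMod 2) M] (x : M) :
    x + x = 0 := by
  have h : ((2 : ZMod 2)) • x = 0 := by
    have : (2 : ZMod 2) = 0 := rfl
    rw [this, zero_smul]
  rwa [two_smul] at h

private lemma char2_eq_of_add {M : Type*} [AddCommGroup M] [Module (ZMod 2) M] {x y : M}
    (h : x + y = 0) : x = y := by
  have := congrArg (· + y) h
  simpa [add_assoc, char2_add_self y] using this

/-- With the eight trajectory-counting operators satisfying Kronheimer–Mrowka's
relations, the maps `j* = [[id,0],[0,d∂_su]] : Ĉ → Č`, `i* = [[0,id],[d_uo,d_us]] :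
Č → C̄` and `∂ = [[d_os,0],[d_us,id]] : C̄ → Ĉ` are chain maps. -/
theorem j_i_boundary_chain_maps {Co Cs Cu : Type*}
    [AddCommGroup Co] [Module (ZMod 2) Co]
    [AddCommGroup Cs] [Module (ZMod 2) Cs]
    [AddCommGroup Cu] [Module (ZMod 2) Cu]
    (doo : Co →ₗ[ZMod 2] Co) (dos : Cs →ₗ[ZMod 2] Co)
    (duo : Co →ₗ[ZMod 2] Cu) (dus : Cs →ₗ[ZMod 2] Cu)
    (bss : Cs →ₗ[ZMod 2] Cs) (bsu : Cu →ₗ[ZMod 2] Cs)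
    (bus : Cs →ₗ[ZMod 2] Cu) (buu : Cu →ₗ[ZMod 2] Cu)
    (h1 : doo ∘ₗ doo + dos ∘ₗ bsu ∘ₗ duo = 0)
    (h2 : doo ∘ₗ dos + dos ∘ₗ bss + dos ∘ₗ bsu ∘ₗ dus = 0)
    (h3 : duo ∘ₗ doo + buu ∘ₗ duo + dus ∘ₗ bsu ∘ₗ duo = 0)
    (h4 : bus + duo ∘ₗ dos + buu ∘ₗ dus + dus ∘ₗ bss + dus ∘ₗ bsu ∘ₗ dus = 0)
    (h5 : bss ∘ₗ bss + bsu ∘ₗ bus = 0)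
    (h6 : bss ∘ₗ bsu + bsu ∘ₗ buu = 0)
    (h7 : bus ∘ₗ bss + buu ∘ₗ bus = 0)
    (h8 : bus ∘ₗ bsu + buu ∘ₗ buu = 0) :
    let dCheck : (Co × Cs) →ₗ[ZMod 2] (Co × Cs) :=
      LinearMap.prod
        (doo ∘ₗ LinearMap.fst (ZMod 2) Co Cs + dos ∘ₗ LinearMap.snd (ZMod 2) Co Cs)
        ((bsu ∘ₗ duo) ∘ₗ LinearMap.fst (ZMod 2) Co Cs +
          (bss + bsu ∘ₗ dus) ∘ₗ LinearMap.snd (ZMod 2) Co Cs)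
    let dHat : (Co × Cu) →ₗ[ZMod 2] (Co × Cu) :=
      LinearMap.prod
        (doo ∘ₗ LinearMap.fst (ZMod 2) Co Cu + (dos ∘ₗ bsu) ∘ₗ LinearMap.snd (ZMod 2) Co Cu)
        (duo ∘ₗ LinearMap.fst (ZMod 2) Co Cu +
          (buu + dus ∘ₗ bsu) ∘ₗ LinearMap.snd (ZMod 2) Co Cu)
    let dBar : (Cs × Cu) →ₗ[ZMod 2] (Cs × Cu) :=
      LinearMap.prod
        (bss ∘ₗ LinearMap.fst (ZMod 2) Cs Cu + bsu ∘ₗ LinearMap.snd (ZMod 2) Cs Cu)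
        (bus ∘ₗ LinearMap.fst (ZMod 2) Cs Cu + buu ∘ₗ LinearMap.snd (ZMod 2) Cs Cu)
    let jStar : (Co × Cu) →ₗ[ZMod 2] (Co × Cs) :=
      LinearMap.prod (LinearMap.fst (ZMod 2) Co Cu)
        (bsu ∘ₗ LinearMap.snd (ZMod 2) Co Cu)
    let iStar : (Co × Cs) →ₗ[ZMod 2] (Cs × Cu) :=
      LinearMap.prod (LinearMap.snd (ZMod 2) Co Cs)
        (duo ∘ₗ LinearMap.fst (ZMod 2) Co Cs + dus ∘ₗ LinearMap.snd (ZMod 2) Co Cs)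
    let bdry : (Cs × Cu) →ₗ[ZMod 2] (Co × Cu) :=
      LinearMap.prod (dos ∘ₗ LinearMap.fst (ZMod 2) Cs Cu)
        (dus ∘ₗ LinearMap.fst (ZMod 2) Cs Cu + LinearMap.snd (ZMod 2) Cs Cu)
    dCheck ∘ₗ jStar = jStar ∘ₗ dHat ∧
      dBar ∘ₗ iStar = iStar ∘ₗ dCheck ∧
      dHat ∘ₗ bdry = bdry ∘ₗ dBar := by
  have H2 := fun b => LinearMap.ext_iff.mp h2 b
  have H3 := fun a => LinearMap.ext_iff.mp h3 a
  have H4 := fun b => LinearMap.ext_iff.mp h4 b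
  have H6 := fun b => LinearMap.ext_iff.mp h6 b
  simp only [LinearMap.add_apply, LinearMap.comp_apply, LinearMap.zero_apply] at H2 H3 H4 H6
  have E2 : ∀ b, dos (bss b) = doo (dos b) + dos (bsu (dus b)) := fun b =>
    char2_eq_of_add (by have := H2 b; abel_nf at this ⊢; exact this)
  have E3 : ∀ a, buu (duo a) = duo (doo a) + dus (bsu (duo a)) := fun a =>
    char2_eq_of_add (by have := H3 a; abel_nf at this ⊢; exact this)
  have E4 : ∀ b, bus b = duo (dos b) + buu (dus b) + dus (bss b) + dus (bsu (dus b)) := fun b =>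
    char2_eq_of_add (by have := H4 b; abel_nf at this ⊢; exact this)
  have E6 : ∀ b, bss (bsu b) = bsu (buu b) := fun b =>
    char2_eq_of_add (by have := H6 b; exact this)
  refine ⟨?_, ?_, ?_⟩ <;> apply LinearMap.ext <;> rintro ⟨a, b⟩ <;>
      apply Prod.ext <;>
      simp [LinearMap.comp_apply, map_add]
  · exact E6 b
  · abel
  · simp only [E3, E4]; abel_nf
    simp only [two_nsmul, two_zsmul, char2_add_self, add_zero, zero_add]
  · rw [E2 a]; abel
  · simp only [E3, E4]; abel_nf
    simp only [two_nsmul, two_zsmul, char2_add_self, add_zero, zero_add]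
end
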